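/- Let K be a real n×n positive semidefinite matrix with positive semidefinite square root K^{1/2}, let P be a real n×m matrix, and set C = KP and W = PᵀKP; assume W is invertible. Let K^{1/2}P = F S Nᵀ be a singular value decomposition, where F is n×m with orthonormal columns, N is m×m orthogonal, and S is m×m diagonal with positive diagonal entries. Then W = N S² Nᵀ and C W⁻¹ Cᵀ = K^{1/2} F Fᵀ K^{1/2}; consequently K − C W⁻¹ Cᵀ = K^{1/2}(I_n − FFᵀ)K^{1/2} is positive semidefinite. -/

import Mathlib

open Matrix

/-- The square root of a positive semidefinite matrix, as defined in the older Mathlib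
(removed since). -/
noncomputable def Matrix.PosSemidef.sqrt {n : Type*} [Fintype n] [DecidableEq n]
    {A : Matrix n n ℝ} (hA : A.PosSemidef) : Matrix n n ℝ :=
  hA.1.eigenvectorUnitary.1 * diagonal ((↑) ∘ (fun x => Real.sqrt x) ∘ hA.1.eigenvalues) *
    (star hA.1.eigenvectorUnitary : Matrix n n ℝ)

theorem stmt_3 {n m : ℕ} (K : Matrix (Fin n) (Fin n) ℝ) (hK : K.PosSemidef)
    (P : Matrix (Fin n) (Fin m) ℝ)
    (C : Matrix (Fin n) (Fin m) ℝ) (W : Matrix (Fin m) (Fin m) ℝ)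
    (hC : C = K * P) (hW : W = Pᵀ * K * P) (hWinv : IsUnit W)
    -- singular value decomposition K^{1/2} P = F S Nᵀ
    (F : Matrix (Fin n) (Fin m) ℝ) (N : Matrix (Fin m) (Fin m) ℝ) (s : Fin m → ℝ)
    (hF : Fᵀ * F = 1) (hN : Nᵀ * N = 1) (hs : ∀ i, 0 < s i)
    (hSVD : hK.sqrt * P = F * Matrix.diagonal s * Nᵀ) :
    W = N * Matrix.diagonal (fun i => s i ^ 2) * Nᵀ ∧
    C * W⁻¹ * Cᵀ = hK.sqrt * F * Fᵀ * hK.sqrt ∧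
    K - C * W⁻¹ * Cᵀ = hK.sqrt * (1 - F * Fᵀ) * hK.sqrt ∧
    (K - C * W⁻¹ * Cᵀ).PosSemidef := by
  have hQsym : hK.sqrtᵀ = hK.sqrt := by
    unfold Matrix.PosSemidef.sqrt
    simp [Matrix.transpose_mul, Matrix.mul_assoc, Matrix.star_eq_conjTranspose, Matrix.conjTranspose_eq_transpose_of_trivial]
  have hQQ : hK.sqrt * hK.sqrt = K := by
    have hU : star (hK.1.eigenvectorUnitary : Matrix (Fin n) (Fin n) ℝ) * hK.1.eigenvectorUnitary = 1 :=
      Unitary.star_mul_self_of_mem hK.1.eigenvectorUnitary.2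
    unfold Matrix.PosSemidef.sqrt
    conv_rhs => rw [hK.1.spectral_theorem, Unitary.conjStarAlgAut_apply]
    rw [show ∀ A B C : Matrix (Fin n) (Fin n) ℝ, A * B * C * (A * B * C) = A * (B * (C * A) * B) * C from
      fun A B C => by simp only [Matrix.mul_assoc], hU, Matrix.mul_one, diagonal_mul_diagonal]
    congr 3
    funext i
    simp [Real.mul_self_sqrt (hK.eigenvalues_nonneg i)]
  generalize hQdef : hK.sqrt = Q at hSVD hQsym hQQ ⊢
  have hNN : N * Nᵀ = 1 := mul_eq_one_comm.mp hN
  -- W = N S² Nᵀ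
  have hW2 : W = N * Matrix.diagonal (fun i => s i ^ 2) * Nᵀ := by
    have h1 : W = (Q * P)ᵀ * (Q * P) := by
      rw [hW, ← hQQ, Matrix.transpose_mul, hQsym]
      simp [Matrix.mul_assoc]
    rw [h1, hSVD]
    have expand : (F * Matrix.diagonal s * Nᵀ)ᵀ * (F * Matrix.diagonal s * Nᵀ) =
        N * (Matrix.diagonal s * ((Fᵀ * F) * Matrix.diagonal s)) * Nᵀ := by
      simp [Matrix.transpose_mul, Matrix.mul_assoc]
    rw [expand, hF, Matrix.one_mul, Matrix.diagonal_mul_diagonal]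
    congr 2
    funext i
    ring
  -- inverse of W
  have hWinv2 : W⁻¹ = N * Matrix.diagonal (fun i => (s i ^ 2)⁻¹) * Nᵀ := by
    apply Matrix.inv_eq_right_inv
    rw [hW2]
    calc N * Matrix.diagonal (fun i => s i ^ 2) * Nᵀ *
          (N * Matrix.diagonal (fun i => (s i ^ 2)⁻¹) * Nᵀ)
        = N * (Matrix.diagonal (fun i => s i ^ 2) * ((Nᵀ * N) *
            Matrix.diagonal (fun i => (s i ^ 2)⁻¹))) * Nᵀ := by
          simp [Matrix.mul_assoc]
      _ = 1 := by
          rw [hN, Matrix.one_mul, Matrix.diagonal_mul_diagonal]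
          have : (fun i => s i ^ 2 * (s i ^ 2)⁻¹) = fun _ => (1:ℝ) := by
            funext i
            field_simp [(hs i).ne']
          rw [this]
          simp [hNN]
  have hC2 : C = Q * (F * Matrix.diagonal s * Nᵀ) := by
    rw [hC, ← hQQ, Matrix.mul_assoc, hSVD]
  have hmid : C * W⁻¹ * Cᵀ = Q * F * Fᵀ * Q := by
    rw [hC2, hWinv2]
    have hCT : (Q * (F * Matrix.diagonal s * Nᵀ))ᵀ = N * Matrix.diagonal s * Fᵀ * Q := by
      simp [Matrix.transpose_mul, Matrix.mul_assoc, hQsym]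
    rw [hCT]
    calc Q * (F * Matrix.diagonal s * Nᵀ) * (N * Matrix.diagonal (fun i => (s i ^ 2)⁻¹) * Nᵀ) *
          (N * Matrix.diagonal s * Fᵀ * Q)
        = Q * (F * (Matrix.diagonal s * ((Nᵀ * N) * (Matrix.diagonal (fun i => (s i ^ 2)⁻¹) *
            ((Nᵀ * N) * (Matrix.diagonal s)))))) * (Fᵀ * Q) := by
          simp [Matrix.mul_assoc]
      _ = Q * F * Fᵀ * Q := by
          rw [hN]
          simp only [Matrix.one_mul, Matrix.diagonal_mul_diagonal]
          have hfun : (fun i => s i * ((s i ^ 2)⁻¹ * s i)) = fun _ => (1:ℝ) := by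
            funext i
            have h2 : s i ^ 2 ≠ 0 := (pow_pos (hs i) 2).ne'
            field_simp
            exact mul_inv_cancel₀ (hs i).ne'
          rw [hfun, Matrix.diagonal_one]
          simp [Matrix.mul_assoc]
  have hdiff : K - C * W⁻¹ * Cᵀ = Q * (1 - F * Fᵀ) * Q := by
    rw [hmid, ← hQQ]
    simp [Matrix.mul_sub, Matrix.sub_mul, Matrix.mul_assoc]
  refine ⟨hW2, hmid, hdiff, ?_⟩
  rw [hdiff]
  have hproj : (1 - F * Fᵀ) = (1 - F * Fᵀ) * (1 - F * Fᵀ)ᴴ := by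
    have : (1 - F * Fᵀ)ᴴ = (1 - F * Fᵀ) := by
      rw [Matrix.conjTranspose_eq_transpose_of_trivial]
      simp [Matrix.transpose_sub, Matrix.transpose_mul]
    rw [this]
    have : F * Fᵀ * (F * Fᵀ) = F * Fᵀ := by
      calc F * Fᵀ * (F * Fᵀ) = F * ((Fᵀ * F) * Fᵀ) := by simp [Matrix.mul_assoc]
        _ = F * Fᵀ := by rw [hF]; simp
    noncomm_ring [this]
  have hPSDmid : (1 - F * Fᵀ).PosSemidef := by
    rw [hproj]
    exact Matrix.posSemidef_self_mul_conjTranspose _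
  have := hPSDmid.mul_mul_conjTranspose_same Q
  have hQH : Qᴴ = Q := by
    rw [show Qᴴ = Qᵀ from rfl, hQsym]
  rwa [hQH] at this
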